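/- Let (M, φ, ξ, η, g) be an almost contact metric manifold satisfying condition C₁: (∇_X φ)Y + (∇_{φX} φ)(φY) = 2g(X,Y)ξ - η(Y)X - η(X)η(Y)ξ - η(Y)hX for all X, Y. Then ∇_ξ ξ = 0. -/

import Mathlib

/-- Abstract model of an almost contact manifold: `C` is the ring of smooth
functions, `V` the `C`-module of vector fields, with Lie bracket `bracket`,
the derivation action `act X f = X f`, and the almost contact structure
`(phi, xi, eta)`. -/
structure AlmostContactStr (C V : Type*) [CommRing C] [Algebra ℝ C]
    [AddCommGroup V] [Module C V] where
  bracket : V → V → V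
  act : V → C → C
  phi : V →ₗ[C] V
  xi : V
  eta : V →ₗ[C] C
  bracket_antisymm : ∀ X Y, bracket X Y = - bracket Y X
  bracket_add_left : ∀ X Y Z, bracket (X + Y) Z = bracket X Z + bracket Y Z
  bracket_smul_right : ∀ (c : C) (X Y : V),
    bracket X (c • Y) = c • bracket X Y + act X c • Y
  act_add_left : ∀ X Y c, act (X + Y) c = act X c + act Y c
  act_smul_left : ∀ (a : C) (X : V) (c : C), act (a • X) c = a * act X c
  act_add : ∀ X a b, act X (a + b) = act X a + act X b
  act_mul : ∀ X a b, act X (a * b) = act X a * b + a * act X b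
  phi_phi : ∀ X, phi (phi X) = - X + eta X • xi
  phi_xi : phi xi = 0
  eta_phi : ∀ X, eta (phi X) = 0
  eta_xi : eta xi = 1

/-- An almost contact metric structure together with its Levi-Civita
connection `nabla` (torsion-free and metric). -/
structure ACMetricStr (C V : Type*) [CommRing C] [Algebra ℝ C]
    [AddCommGroup V] [Module C V] extends AlmostContactStr C V where
  g : V →ₗ[C] V →ₗ[C] C
  g_symm : ∀ X Y, g X Y = g Y X
  g_phi : ∀ X Y, g (phi X) (phi Y) = g X Y - eta X * eta Y
  eta_eq : ∀ X, eta X = g xi X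
  nabla : V → V → V
  nabla_add_left : ∀ X Y Z, nabla (X + Y) Z = nabla X Z + nabla Y Z
  nabla_smul_left : ∀ (c : C) (X Y : V), nabla (c • X) Y = c • nabla X Y
  nabla_add_right : ∀ X Y Z, nabla X (Y + Z) = nabla X Y + nabla X Z
  nabla_leibniz : ∀ (c : C) (X Y : V),
    nabla X (c • Y) = c • nabla X Y + act X c • Y
  torsion_free : ∀ X Y, nabla X Y - nabla Y X = bracket X Y
  metric_compat : ∀ X Y Z, act X (g Y Z) = g (nabla X Y) Z + g Y (nabla X Z)

variable {C V : Type*} [CommRing C] [Algebra ℝ C]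
  [AddCommGroup V] [Module C V] [Module ℝ V] [IsScalarTower ℝ C V]

namespace ACMetricStr

variable (A : ACMetricStr C V)

/-- `h = (1/2) L_ξ φ`, i.e. `hX = (1/2)([ξ, φX] - φ[ξ, X])`. -/
noncomputable def hT (X : V) : V :=
  (1/2 : ℝ) • (A.bracket A.xi (A.phi X) - A.phi (A.bracket A.xi X))

/-- `(∇_X φ)Y`. -/
noncomputable def covPhi (X Y : V) : V := A.nabla X (A.phi Y) - A.phi (A.nabla X Y)

/-- `(∇_X η)(Y)`. -/
noncomputable def covEta (X Y : V) : C := A.act X (A.eta Y) - A.eta (A.nabla X Y)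

/-- `dη(X,Y) = (1/2)(X(η Y) - Y(η X) - η [X,Y])`. -/
noncomputable def dEta (X Y : V) : C :=
  (1/2 : ℝ) • (A.act X (A.eta Y) - A.act Y (A.eta X) - A.eta (A.bracket X Y))

/-- `N⁽²⁾(X,Y) = (L_{φX} η)(Y) - (L_{φY} η)(X)`. -/
noncomputable def N2 (X Y : V) : C :=
  (A.act (A.phi X) (A.eta Y) - A.eta (A.bracket (A.phi X) Y))
    - (A.act (A.phi Y) (A.eta X) - A.eta (A.bracket (A.phi Y) X))

/-- Condition `C₁`:
`(∇_X φ)Y + (∇_{φX} φ)(φY) = 2g(X,Y)ξ - η(Y)X - η(X)η(Y)ξ - η(Y)hX`. -/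
noncomputable def C1 : Prop := ∀ X Y : V,
  A.covPhi X Y + A.covPhi (A.phi X) (A.phi Y)
    = ((2 : C) * A.g X Y) • A.xi - A.eta Y • X - (A.eta X * A.eta Y) • A.xi
      - A.eta Y • A.hT X

/-- Condition `C₁'`:
`(∇_X φ)Y + (∇_{φX} φ)(φY) = 2g(X,Y)ξ - 2η(Y)X + η(Y)∇_{φX}ξ`. -/
noncomputable def C1' : Prop := ∀ X Y : V,
  A.covPhi X Y + A.covPhi (A.phi X) (A.phi Y)
    = ((2 : C) * A.g X Y) • A.xi - ((2 : C) * A.eta Y) • X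
      + A.eta Y • A.nabla (A.phi X) A.xi

end ACMetricStr

/-- Condition `C₁` implies `∇_ξ ξ = 0`. -/
theorem nabla_xi_xi_eq_zero_of_C1 (A : ACMetricStr C V) (hC1 : A.C1) :
    A.nabla A.xi A.xi = 0 := by
  have hact0 : ∀ X : V, A.act X 0 = 0 := by
    intro X
    have h := A.act_add X 0 0
    rw [add_zero] at h
    exact right_eq_add.mp h
  have hact1 : ∀ X : V, A.act X 1 = 0 := by
    intro X
    have h := A.act_mul X 1 1
    rw [mul_one, one_mul, mul_one] at h
    exact right_eq_add.mp h
  have hnabla0l : ∀ Y : V, A.nabla 0 Y = 0 := by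
    intro Y
    have h := A.nabla_smul_left (0 : C) A.xi Y
    simpa using h
  have hnabla0r : ∀ X : V, A.nabla X 0 = 0 := by
    intro X
    have h := A.nabla_leibniz (0 : C) X A.xi
    simpa [hact0] using h
  have hbr0 : A.bracket A.xi (0 : V) = 0 := by
    have h := A.bracket_smul_right (0 : C) A.xi A.xi
    simpa [hact0] using h
  have hbrxi : A.bracket A.xi A.xi = 0 := by
    have h := A.torsion_free A.xi A.xi
    simpa using h.symm
  have hhT : A.hT A.xi = 0 := by
    unfold ACMetricStr.hT
    rw [A.phi_xi, hbr0, hbrxi, map_zero, sub_zero, smul_zero]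
  have hgxixi : A.g A.xi A.xi = 1 := by
    have h := A.eta_eq A.xi
    rw [A.eta_xi] at h
    exact h.symm
  -- plug X = Y = xi into C1
  have heq := hC1 A.xi A.xi
  unfold ACMetricStr.covPhi at heq
  rw [A.phi_xi, hnabla0r, hnabla0l, hnabla0l, map_zero, A.eta_xi, hgxixi, hhT] at heq
  simp only [one_smul, mul_one, smul_zero, zero_sub, sub_zero, add_zero] at heq
  rw [two_smul] at heq
  have hphi : A.phi (A.nabla A.xi A.xi) = 0 := by
    have h3 : - A.phi (A.nabla A.xi A.xi) = 0 := by rw [heq]; abel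
    exact neg_eq_zero.mp h3
  -- eta of nabla xi xi is zero
  have heta : A.eta (A.nabla A.xi A.xi) = 0 := by
    have hmc := A.metric_compat A.xi A.xi A.xi
    rw [hgxixi, hact1, A.g_symm (A.nabla A.xi A.xi) A.xi] at hmc
    have h2 : A.g A.xi (A.nabla A.xi A.xi) + A.g A.xi (A.nabla A.xi A.xi) = 0 :=
      hmc.symm
    rw [← two_smul ℝ] at h2
    have h3 : A.g A.xi (A.nabla A.xi A.xi) = 0 := by
      have := congrArg (fun x : C => ((2 : ℝ)⁻¹) • x) h2
      simpa [smul_smul] using this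
    rw [A.eta_eq, h3]
  have hpp := A.phi_phi (A.nabla A.xi A.xi)
  rw [hphi, map_zero, heta, zero_smul, add_zero] at hpp
  exact (neg_eq_zero.mp hpp.symm)
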